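/- Matrix elements of the symmetrized operator 𝐇 = ½(K K† + K† K): with K and K† the linear operators on finitely supported sequences defined on the standard basis (e_n)_{n∈ℕ} of spin-network states by K e_0 = 0, K e_n = (n/2 + 3/2)·e_{n+1} − (n/2 − 1/2)·e_{n−1} for n ≥ 1, K† e_0 = 0, K† e_1 = −(1/2)·e_2, K† e_n = −(n/2)·e_{n+1} + (n/2 + 1)·e_{n−1} for n ≥ 2, one has ½(K(K† e_n) + K†(K e_n)) = C₊(n/2)·e_{n+2} + C₀(n/2)·e_n + C₋(n/2)·e_{n−2} for every n ≥ 1, where C₊(j) = −(j² + 2j + 3/8), C₋(n/2) = 0 for n ∈ {1, 2} and C₋(n/2) = C₊((n−2)/2) for n ≥ 3, C₀(1/2) = 17/8 and C₀(j) = 2j² + 2j + 7/4 for n ≥ 2; moreover ½(K(K† e_0) + K†(K e_0)) = 0. -/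
import Mathlib


/-- The spin-network basis vector e_n (spin j = n/2), as a finitely supported sequence. -/
noncomputable def e (n : ℕ) : ℕ →₀ ℂ := Finsupp.single n 1

/-- C₊(n/2) = −((n/2)² + 2·(n/2) + 3/8). -/
noncomputable def CplusC (n : ℕ) : ℂ := -(((n : ℂ) / 2) ^ 2 + 2 * ((n : ℂ) / 2) + 3 / 8)

/-- C₀(1/2) = 17/8 and C₀(n/2) = 2·(n/2)² + 2·(n/2) + 7/4 for n ≥ 2. -/
noncomputable def CzeroC (n : ℕ) : ℂ :=
  if n = 1 then 17 / 8 else 2 * ((n : ℂ) / 2) ^ 2 + 2 * ((n : ℂ) / 2) + 7 / 4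

/-- C₋(n/2) = 0 for n ∈ {1, 2} and C₋(n/2) = C₊((n−2)/2) for n ≥ 3. -/
noncomputable def CminusC (n : ℕ) : ℂ := if n ≤ 2 then 0 else CplusC (n - 2)

/-- Matrix elements of the symmetrized operator 𝐇 = ½(K K† + K† K), where K = Ĥᴱ and
K† is its formal adjoint, acting on the spin-network basis vectors e_n. -/
theorem symmetrized_matrix_elements (K Kd : (ℕ →₀ ℂ) →ₗ[ℂ] (ℕ →₀ ℂ))
    (hK0 : K (e 0) = 0)
    (hK : ∀ n : ℕ, 1 ≤ n →
      K (e n) = ((n : ℂ) / 2 + 3 / 2) • e (n + 1) - ((n : ℂ) / 2 - 1 / 2) • e (n - 1))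
    (hKd0 : Kd (e 0) = 0)
    (hKd1 : Kd (e 1) = -(1 / 2 : ℂ) • e 2)
    (hKd : ∀ n : ℕ, 2 ≤ n →
      Kd (e n) = -((n : ℂ) / 2) • e (n + 1) + ((n : ℂ) / 2 + 1) • e (n - 1)) :
    (∀ n : ℕ, 1 ≤ n →
      (1 / 2 : ℂ) • (K (Kd (e n)) + Kd (K (e n))) =
        CplusC n • e (n + 2) + CzeroC n • e n + CminusC n • e (n - 2)) ∧
      (1 / 2 : ℂ) • (K (Kd (e 0)) + Kd (K (e 0))) = 0 := by
  constructor
  · intro n hn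
    match n, hn with
    | 1, _ =>
      have h1 := hK 1 (by norm_num)
      have h2 := hK 2 (by norm_num)
      have hd2 := hKd 2 (by norm_num)
      simp only [map_smul, map_add, map_sub, hKd1, h1, h2, hd2, smul_add, smul_sub, smul_smul]
      ext k
      simp only [e, CplusC, CzeroC, CminusC, Finsupp.smul_single, Finsupp.coe_add,
        Finsupp.coe_sub, Pi.add_apply, Pi.sub_apply, Finsupp.single_apply, if_pos, if_neg]
      norm_num
      split_ifs <;> first | (exfalso; omega) | (push_cast; (try simp only [smul_eq_mul]); ring)
    | 2, _ =>
      have h1 := hK 1 (by norm_num)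
      have h3 := hK 3 (by norm_num)
      have hd3 := hKd 3 (by norm_num)
      have h2 := hK 2 (by norm_num)
      simp only [map_smul, map_add, map_sub, hKd1, h1, h2, h3, hd3, hKd 2 (by norm_num),
        smul_add, smul_sub, smul_smul]
      ext k
      simp only [e, CplusC, CzeroC, CminusC, Finsupp.smul_single, Finsupp.coe_add,
        Finsupp.coe_sub, Pi.add_apply, Pi.sub_apply, Finsupp.single_apply]
      norm_num
      split_ifs <;> first | (exfalso; omega) | (push_cast; (try simp only [smul_eq_mul]); ring)
    | (m+3), _ =>
      have hd := hKd (m+3) (by omega)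
      have hdp := hKd (m+4) (by omega)
      have hdm := hKd (m+2) (by omega)
      have hk := hK (m+3) (by omega)
      have hkp := hK (m+4) (by omega)
      have hkm := hK (m+2) (by omega)
      have e1 : m + 3 - 1 = m + 2 := by omega
      have e2 : m + 4 - 1 = m + 3 := by omega
      have e3 : m + 2 - 1 = m + 1 := by omega
      have e4 : m + 3 - 2 = m + 1 := by omega
      rw [e1] at hd hk
      rw [e2] at hdp hkp
      rw [e3] at hdm hkm
      simp only [map_smul, map_add, map_sub, map_neg, hd, hk, hdp, hdm, hkp, hkm,
        smul_add, smul_sub, smul_neg, neg_smul, smul_smul, e4]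
      have hne : m + 3 ≠ 1 := by omega
      have hle : ¬ (m + 3 ≤ 2) := by omega
      ext k
      simp only [e, CplusC, CzeroC, CminusC, if_neg hne, if_neg hle, Finsupp.smul_single,
        Finsupp.coe_add, Finsupp.coe_sub, Finsupp.coe_neg, Pi.add_apply, Pi.sub_apply,
        Pi.neg_apply, Finsupp.single_apply]
      have e5 : m + 3 - 2 = m + 1 := by omega
      rw [e5]
      split_ifs <;> first | (exfalso; omega) | (push_cast; (try simp only [smul_eq_mul]); ring)
  · simp [hK0, hKd0]
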